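/- The function φ(s,θ) = (1 + s·e^{-θ})·(cos θ, sin θ) is an injective continuous map (indeed a topological embedding) from [1/2, 1] × [0, ∞) into the region {x ∈ ℝ² : |x| > 1}. -/

import Mathlib

open Real Set

/-- The spiral map φ(s,θ) = (1 + s·e^{-θ})·(cos θ, sin θ). -/
noncomputable def phi : ℝ × ℝ → ℝ × ℝ :=
  fun p => ((1 + p.1 * Real.exp (-p.2)) * Real.cos p.2,
            (1 + p.1 * Real.exp (-p.2)) * Real.sin p.2)

noncomputable def radf (x : ℝ × ℝ) : ℝ := Real.sqrt (x.1 ^ 2 + x.2 ^ 2)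

noncomputable def Lf (x : ℝ × ℝ) : ℝ := -Real.log (radf x - 1)

noncomputable def wf (x : ℝ × ℝ) : ℂ :=
  ⟨Real.cos (Lf x) * x.1 + Real.sin (Lf x) * x.2,
   Real.sin (Lf x) * x.1 - Real.cos (Lf x) * x.2⟩

noncomputable def ginv (x : ℝ × ℝ) : ℝ × ℝ :=
  ((radf x - 1) * Real.exp (Lf x - Complex.arg (wf x)), Lf x - Complex.arg (wf x))

lemma radf_phi {s θ : ℝ} (hs : 0 ≤ s) : radf (phi (s, θ)) = 1 + s * Real.exp (-θ) := by
  have h1 : (0:ℝ) < 1 + s * Real.exp (-θ) := by nlinarith [Real.exp_pos (-θ)]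
  have h2 : (phi (s, θ)).1 ^ 2 + (phi (s, θ)).2 ^ 2 = (1 + s * Real.exp (-θ)) ^ 2 := by
    have := Real.sin_sq_add_cos_sq θ
    simp only [phi]
    nlinarith
  rw [radf, h2, Real.sqrt_sq h1.le]

lemma Lf_phi {s θ : ℝ} (hs : 0 < s) : Lf (phi (s, θ)) = θ - Real.log s := by
  have h : radf (phi (s, θ)) - 1 = s * Real.exp (-θ) := by rw [radf_phi hs.le]; ring
  rw [Lf, h, Real.log_mul hs.ne' (Real.exp_pos _).ne', Real.log_exp]
  ring

lemma neg_log_mem {s : ℝ} (hs : s ∈ Icc (1/2:ℝ) 1) :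
    -Real.log s ∈ Icc (0:ℝ) (Real.log 2) := by
  obtain ⟨h1, h2⟩ := hs
  constructor
  · simpa using Real.log_nonpos (by linarith) h2
  · have : Real.log (1/2) ≤ Real.log s := Real.log_le_log (by norm_num) h1
    rw [Real.log_div one_ne_zero (by norm_num), Real.log_one] at this
    linarith

lemma log_two_lt : Real.log 2 < 1 := by
  have := Real.log_two_lt_d9; linarith

lemma wf_phi {s θ : ℝ} (hs : s ∈ Icc (1/2:ℝ) 1) :
    wf (phi (s, θ)) = ⟨(1 + s * Real.exp (-θ)) * Real.cos (-Real.log s),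
                       (1 + s * Real.exp (-θ)) * Real.sin (-Real.log s)⟩ := by
  have hs0 : (0:ℝ) < s := lt_of_lt_of_le (by norm_num) hs.1
  have hL : Lf (phi (s, θ)) = θ - Real.log s := Lf_phi hs0
  have e1 := Real.cos_sub θ (θ - Real.log s)
  have e2 := Real.sin_sub θ (θ - Real.log s)
  rw [show θ - (θ - Real.log s) = Real.log s from by ring] at e1 e2
  apply Complex.ext
  · show Real.cos (Lf (phi (s,θ))) * (phi (s,θ)).1 + Real.sin (Lf (phi (s,θ))) * (phi (s,θ)).2 = _
    rw [hL]
    show Real.cos (θ - Real.log s) * ((1 + s * Real.exp (-θ)) * Real.cos θ)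
        + Real.sin (θ - Real.log s) * ((1 + s * Real.exp (-θ)) * Real.sin θ) = _
    rw [Real.cos_neg]
    linear_combination (-(1 + s * Real.exp (-θ))) * e1
  · show Real.sin (Lf (phi (s,θ))) * (phi (s,θ)).1 - Real.cos (Lf (phi (s,θ))) * (phi (s,θ)).2 = _
    rw [hL]
    show Real.sin (θ - Real.log s) * ((1 + s * Real.exp (-θ)) * Real.cos θ)
        - Real.cos (θ - Real.log s) * ((1 + s * Real.exp (-θ)) * Real.sin θ) = _
    rw [Real.sin_neg]
    linear_combination (1 + s * Real.exp (-θ)) * e2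

lemma arg_wf {s θ : ℝ} (hs : s ∈ Icc (1/2:ℝ) 1) :
    Complex.arg (wf (phi (s, θ))) = -Real.log s := by
  have h1 : (0:ℝ) < 1 + s * Real.exp (-θ) := by
    nlinarith [Real.exp_pos (-θ), hs.1]
  have hm := neg_log_mem hs
  set t := -Real.log s with ht
  set R := 1 + s * Real.exp (-θ) with hR
  have hw : wf (phi (s, θ)) = (R : ℂ) *
      (Complex.cos (t : ℂ) + Complex.sin (t : ℂ) * Complex.I) := by
    rw [wf_phi hs, ← Complex.ofReal_cos, ← Complex.ofReal_sin, ← ht, ← hR]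
    apply Complex.ext <;>
      simp [Complex.mul_re, Complex.mul_im, Complex.cos_ofReal_re, Complex.sin_ofReal_re]
  rw [hw, Complex.arg_real_mul _ h1, Complex.arg_cos_add_sin_mul_I]
  constructor
  · linarith [Real.pi_gt_three, hm.1]
  · linarith [Real.pi_gt_three, hm.2, log_two_lt]

lemma ginv_phi {s θ : ℝ} (hs : s ∈ Icc (1/2:ℝ) 1) : ginv (phi (s, θ)) = (s, θ) := by
  have hs0 : (0:ℝ) < s := lt_of_lt_of_le (by norm_num) hs.1
  have hr : radf (phi (s, θ)) - 1 = s * Real.exp (-θ) := by rw [radf_phi hs0.le]; ring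
  have hL : Lf (phi (s, θ)) = θ - Real.log s := Lf_phi hs0
  have ha := arg_wf (θ := θ) hs
  have hθ' : Lf (phi (s, θ)) - Complex.arg (wf (phi (s, θ))) = θ := by rw [hL, ha]; ring
  simp only [ginv, hθ', hr]
  rw [mul_assoc, ← Real.exp_add]
  simp

lemma continuous_radf : Continuous radf :=
  Real.continuous_sqrt.comp (by fun_prop)

lemma contAt_ginv {s θ : ℝ} (hs : s ∈ Icc (1/2:ℝ) 1) (_hθ : 0 ≤ θ) :
    ContinuousAt ginv (phi (s, θ)) := by
  have hs0 : (0:ℝ) < s := lt_of_lt_of_le (by norm_num) hs.1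
  have hrx : radf (phi (s, θ)) - 1 ≠ 0 := by
    rw [radf_phi hs0.le]
    have := Real.exp_pos (-θ)
    nlinarith
  have hL : ContinuousAt Lf (phi (s, θ)) := by
    exact (((continuous_radf.continuousAt).sub continuousAt_const).log hrx).neg
  have h1 : ContinuousAt (fun y : ℝ × ℝ => Real.cos (Lf y) * y.1 + Real.sin (Lf y) * y.2)
      (phi (s, θ)) :=
    ((Real.continuous_cos.continuousAt.comp' hL).mul continuousAt_fst).add
      ((Real.continuous_sin.continuousAt.comp' hL).mul continuousAt_snd)
  have h2 : ContinuousAt (fun y : ℝ × ℝ => Real.sin (Lf y) * y.1 - Real.cos (Lf y) * y.2)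
      (phi (s, θ)) :=
    ((Real.continuous_sin.continuousAt.comp' hL).mul continuousAt_fst).sub
      ((Real.continuous_cos.continuousAt.comp' hL).mul continuousAt_snd)
  have hw : ContinuousAt wf (phi (s, θ)) := by
    have hwf_eq : wf = fun y : ℝ × ℝ =>
        ((Real.cos (Lf y) * y.1 + Real.sin (Lf y) * y.2 : ℝ) : ℂ)
          + ((Real.sin (Lf y) * y.1 - Real.cos (Lf y) * y.2 : ℝ) : ℂ) * Complex.I :=
      funext fun y => Complex.mk_eq_add_mul_I _ _
    rw [hwf_eq]
    exact (Complex.continuous_ofReal.continuousAt.comp' h1).add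
      ((Complex.continuous_ofReal.continuousAt.comp' h2).mul continuousAt_const)
  have hre : 0 < (wf (phi (s, θ))).re := by
    rw [wf_phi hs]
    have hm := neg_log_mem hs
    have hcp : 0 < Real.cos (-Real.log s) := by
      apply Real.cos_pos_of_mem_Ioo
      constructor
      · linarith [Real.pi_gt_three, hm.1]
      · linarith [Real.pi_gt_three, hm.2, log_two_lt]
    have hRp : (0:ℝ) < 1 + s * Real.exp (-θ) := by nlinarith [Real.exp_pos (-θ)]
    exact mul_pos hRp hcp
  have harg : ContinuousAt Complex.arg (wf (phi (s, θ))) :=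
    Complex.continuousAt_arg (Or.inl hre)
  have hA : ContinuousAt (fun y => Lf y - Complex.arg (wf y)) (phi (s, θ)) :=
    hL.sub (harg.comp' hw)
  exact (((continuous_radf.continuousAt).sub continuousAt_const).mul
    hA.rexp).prodMk hA

/-- φ is an injective continuous map, indeed a topological embedding, from
[1/2,1] × [0,∞) into {x ∈ ℝ² : |x| > 1}. -/
theorem stmt_0 :
    Set.MapsTo phi (Set.Icc (1/2 : ℝ) 1 ×ˢ Set.Ici (0 : ℝ))
      {x : ℝ × ℝ | 1 < Real.sqrt (x.1 ^ 2 + x.2 ^ 2)} ∧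
    ContinuousOn phi (Set.Icc (1/2 : ℝ) 1 ×ˢ Set.Ici (0 : ℝ)) ∧
    Set.InjOn phi (Set.Icc (1/2 : ℝ) 1 ×ˢ Set.Ici (0 : ℝ)) ∧
    Topology.IsEmbedding ((Set.Icc (1/2 : ℝ) 1 ×ˢ Set.Ici (0 : ℝ)).restrict phi) := by
  have hphi : Continuous phi := by unfold phi; fun_prop
  have hginv : ∀ p : ℝ × ℝ, p ∈ Set.Icc (1/2 : ℝ) 1 ×ˢ Set.Ici (0 : ℝ) →
      ginv (phi p) = p := by
    rintro ⟨s, θ⟩ hp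
    exact ginv_phi hp.1
  have hinj : Set.InjOn phi (Set.Icc (1/2 : ℝ) 1 ×ˢ Set.Ici (0 : ℝ)) := by
    intro p hp q hq h
    rw [← hginv p hp, ← hginv q hq, h]
  refine ⟨?_, hphi.continuousOn, hinj, ?_⟩
  · rintro ⟨s, θ⟩ hp
    have : Real.sqrt ((phi (s, θ)).1 ^ 2 + (phi (s, θ)).2 ^ 2) = radf (phi (s, θ)) := rfl
    simp only [Set.mem_setOf_eq]
    rw [this, radf_phi (le_trans (by norm_num) hp.1.1)]
    nlinarith [Real.exp_pos (-θ), hp.1.1]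
  · refine Topology.IsEmbedding.mk' _ (fun a b hab => Subtype.ext (hinj a.2 b.2 hab)) ?_
    intro a
    apply le_antisymm
    · obtain ⟨⟨s, θ⟩, ha⟩ := a
      have hc : ContinuousAt ginv (phi (s, θ)) := contAt_ginv ha.1 ha.2
      have hgf : ginv ∘ (Set.Icc (1/2 : ℝ) 1 ×ˢ Set.Ici (0 : ℝ)).restrict phi
          = Subtype.val := funext fun b => hginv b.1 b.2
      calc Filter.comap ((Set.Icc (1/2 : ℝ) 1 ×ˢ Set.Ici (0 : ℝ)).restrict phi)
            (nhds (phi (s, θ)))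
          ≤ Filter.comap ((Set.Icc (1/2 : ℝ) 1 ×ˢ Set.Ici (0 : ℝ)).restrict phi)
            (Filter.comap ginv (nhds (ginv (phi (s, θ))))) :=
            Filter.comap_mono (Filter.tendsto_iff_comap.mp hc)
        _ = Filter.comap (ginv ∘ (Set.Icc (1/2 : ℝ) 1 ×ˢ Set.Ici (0 : ℝ)).restrict phi)
            (nhds (ginv (phi (s, θ)))) := Filter.comap_comap
        _ = Filter.comap Subtype.val (nhds ((s, θ) : ℝ × ℝ)) := by
            rw [hgf, ginv_phi ha.1]
        _ = nhds (⟨(s, θ), ha⟩ : ↥(Set.Icc (1/2 : ℝ) 1 ×ˢ Set.Ici (0 : ℝ))) :=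
            nhds_subtype_eq_comap.symm
    · exact Filter.tendsto_iff_comap.mp ((hphi.comp continuous_subtype_val).tendsto a)
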